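/- Under the hypotheses of the previous setup (convex program, Lagrangian L with multipliers satisfying |λ_i| < ρ and 0 ≤ μ_j < ρ, stationarity ∇L(y) = 0, complementary slackness μ_j h_j(y) = 0, and y feasible), the point y is a global minimizer of the exact penalty surrogate E_ρ, and every global minimizer of E_ρ is a solution of the constrained program. -/

import Mathlib

open Set

lemma convexOn_min_of_gradient_zero {n : ℕ} {L : EuclideanSpace ℝ (Fin n) → ℝ}
    (hc : ConvexOn ℝ Set.univ L) (hd : Differentiable ℝ L)
    {y : EuclideanSpace ℝ (Fin n)} (hstat : gradient L y = 0)
    (x : EuclideanSpace ℝ (Fin n)) : L y ≤ L x := by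
  have hf0 : fderiv ℝ L y = 0 := by
    have h := hstat
    unfold gradient at h
    exact (LinearIsometryEquiv.map_eq_zero_iff _).mp h
  set ψ : ℝ → ℝ := fun t => L (y + t • (x - y)) with hψ
  have h1 : HasDerivAt (fun t : ℝ => y + t • (x - y)) (x - y) 0 := by
    simpa using ((hasDerivAt_id (0 : ℝ)).smul_const (x - y)).const_add y
  have key : HasDerivAt ψ 0 0 := by
    have h2 := (hd (y + (0:ℝ) • (x - y))).hasFDerivAt.comp_hasDerivAt 0 h1
    simpa [hψ, hf0, Function.comp_def] using h2
  have hconv : ConvexOn ℝ Set.univ ψ := by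
    have h := hc.comp_affineMap (AffineMap.lineMap y x)
    rw [Set.preimage_univ] at h
    have he : (L ∘ (AffineMap.lineMap y x)) = ψ := by
      funext t
      simp [hψ, AffineMap.lineMap_apply_module', add_comm]
    rwa [he] at h
  have hs := hconv.le_slope_of_hasDerivAt (Set.mem_univ (0:ℝ)) (Set.mem_univ 1) one_pos key
  have hψ0 : ψ 0 = L y := by simp [hψ]
  have hψ1 : ψ 1 = L x := by simp [hψ]
  have h3 : (0:ℝ) ≤ L x - L y := by
    simpa [slope_def_field, hψ0, hψ1] using hs
  linarith

theorem exact_penalty_minimizer_iff_constrained_solution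
    {n r s : ℕ}
    (f : EuclideanSpace ℝ (Fin n) → ℝ)
    (hf : ConvexOn ℝ Set.univ f) (hfd : Differentiable ℝ f)
    (g : Fin r → (EuclideanSpace ℝ (Fin n) →ᵃ[ℝ] ℝ))
    (h : Fin s → EuclideanSpace ℝ (Fin n) → ℝ)
    (hh : ∀ j, ConvexOn ℝ Set.univ (h j)) (hhd : ∀ j, Differentiable ℝ (h j))
    (lam : Fin r → ℝ) (mu : Fin s → ℝ) (hmu : ∀ j, 0 ≤ mu j)
    (L : EuclideanSpace ℝ (Fin n) → ℝ)
    (hL : ∀ x, L x = f x + ∑ i, lam i * g i x + ∑ j, mu j * h j x)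
    (E : EuclideanSpace ℝ (Fin n) → ℝ)
    (ρ : ℝ) (hρ : ∀ i, |lam i| < ρ) (hρ' : ∀ j, mu j < ρ)
    (hE : ∀ x, E x = f x + ρ * ∑ i, |g i x| + ρ * ∑ j, max 0 (h j x))
    (y : EuclideanSpace ℝ (Fin n))
    (hyfeas : (∀ i, g i y = 0) ∧ (∀ j, h j y ≤ 0))
    (hstat : gradient L y = 0)
    (hslack : ∀ j, mu j * h j y = 0) :
    (∀ x, E y ≤ E x) ∧
      (∀ z, (∀ x, E z ≤ E x) →
        ((∀ i, g i z = 0) ∧ (∀ j, h j z ≤ 0) ∧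
          ∀ w, (∀ i, g i w = 0) → (∀ j, h j w ≤ 0) → f z ≤ f w)) := by
  classical
  obtain ⟨hgy, hhy⟩ := hyfeas
  -- E of a feasible point equals f
  have hEfeas : ∀ w, (∀ i, g i w = 0) → (∀ j, h j w ≤ 0) → E w = f w := by
    intro w hgw hhw
    have h2 : ∀ j : Fin s, max 0 (h j w) = 0 := fun j => max_eq_left (hhw j)
    rw [hE]
    simp [hgw, h2]
  have hEy : E y = f y := hEfeas y hgy hhy
  have hLy : L y = f y := by
    rw [hL]; simp [hgy, hslack]
  -- termwise bounds
  have t1 : ∀ (x : EuclideanSpace ℝ (Fin n)) (i : Fin r), lam i * g i x ≤ ρ * |g i x| := by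
    intro x i
    calc lam i * g i x ≤ |lam i * g i x| := le_abs_self _
      _ = |lam i| * |g i x| := abs_mul _ _
      _ ≤ ρ * |g i x| := mul_le_mul_of_nonneg_right (hρ i).le (abs_nonneg _)
  have t2 : ∀ (x : EuclideanSpace ℝ (Fin n)) (j : Fin s), mu j * h j x ≤ ρ * max 0 (h j x) := by
    intro x j
    rcases le_or_gt (h j x) 0 with hc | hc
    · rw [max_eq_left hc, mul_zero]
      exact mul_nonpos_of_nonneg_of_nonpos (hmu j) hc
    · rw [max_eq_right hc.le]
      exact mul_le_mul_of_nonneg_right (hρ' j).le hc.le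
  have hLE : ∀ x, L x ≤ E x := by
    intro x
    rw [hL x, hE x, Finset.mul_sum, Finset.mul_sum]
    exact add_le_add (add_le_add le_rfl (Finset.sum_le_sum fun i _ => t1 x i))
      (Finset.sum_le_sum fun j _ => t2 x j)
  -- differentiability of the affine maps
  have hgdiff : ∀ i : Fin r, Differentiable ℝ fun x : EuclideanSpace ℝ (Fin n) => (g i) x := by
    intro i
    have hd : Differentiable ℝ fun x : EuclideanSpace ℝ (Fin n) => (g i).linear x := by
      have := (LinearMap.toContinuousLinearMap (g i).linear).differentiable
      simpa using this
    have hdec := AffineMap.decomp (g i)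
    have : (fun x : EuclideanSpace ℝ (Fin n) => (g i) x)
        = fun x => (g i).linear x + (g i) 0 := by
      funext x
      exact congrFun hdec x
    rw [this]
    exact hd.add_const _
  -- convexity of L
  have hLfun : L = fun x => f x + ∑ i, lam i * g i x + ∑ j, mu j * h j x := funext hL
  have h1conv : ConvexOn ℝ Set.univ fun x : EuclideanSpace ℝ (Fin n) => ∑ i, lam i * g i x := by
    refine ⟨convex_univ, fun x _ y' _ a b ha hb hab => le_of_eq ?_⟩
    have key : ∀ i : Fin r, (g i) (a • x + b • y') = a * (g i) x + b * (g i) y' := by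
      intro i
      rw [Convex.combo_affine_apply hab]
      simp
    simp only [key, smul_eq_mul, Finset.mul_sum]
    rw [← Finset.sum_add_distrib]
    exact Finset.sum_congr rfl fun i _ => by ring
  have h2conv : ConvexOn ℝ Set.univ fun x : EuclideanSpace ℝ (Fin n) => ∑ j, mu j * h j x := by
    have hall : ∀ t : Finset (Fin s),
        ConvexOn ℝ Set.univ fun x : EuclideanSpace ℝ (Fin n) => ∑ j ∈ t, mu j * h j x := by
      intro t
      induction t using Finset.induction with
      | empty => simpa using convexOn_const (0:ℝ) convex_univ
      | insert a t' hj ih =>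
        simp only [Finset.sum_insert hj]
        have hsm : ConvexOn ℝ Set.univ fun x : EuclideanSpace ℝ (Fin n) => mu a * h a x := by
          have := (hh a).smul (hmu a)
          simpa [smul_eq_mul] using this
        exact hsm.add ih
    exact hall Finset.univ
  have hLconv : ConvexOn ℝ Set.univ L := by
    rw [hLfun]
    exact (hf.add h1conv).add h2conv
  have hLdiff : Differentiable ℝ L := by
    rw [hLfun]
    apply Differentiable.add
    apply Differentiable.add hfd
    · exact Differentiable.fun_sum fun i _ => (hgdiff i).const_mul (lam i)
    · exact Differentiable.fun_sum fun j _ => (hhd j).const_mul (mu j)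
  have hLmin : ∀ x, L y ≤ L x := convexOn_min_of_gradient_zero hLconv hLdiff hstat
  have part1 : ∀ x, E y ≤ E x := by
    intro x
    rw [hEy, ← hLy]
    exact (hLmin x).trans (hLE x)
  refine ⟨part1, ?_⟩
  intro z hz
  have hEzy : E z = E y := le_antisymm (hz y) (part1 z)
  have hLz : L z = E z := le_antisymm (hLE z) (by
    calc E z = E y := hEzy
      _ = L y := by rw [hEy, hLy]
      _ ≤ L z := hLmin z)
  -- from L z = E z deduce termwise equalities
  have hsum : (∑ i, lam i * g i z) + ∑ j, mu j * h j z
      = (∑ i, ρ * |g i z|) + ∑ j, ρ * max 0 (h j z) := by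
    have := hLz
    rw [hL z, hE z, Finset.mul_sum, Finset.mul_sum] at this
    linarith
  have hsum1 : (∑ i, lam i * g i z) = ∑ i, ρ * |g i z| := by
    have hle1 := Finset.sum_le_sum (fun i (_ : i ∈ Finset.univ) => t1 z i)
    have hle2 := Finset.sum_le_sum (fun j (_ : j ∈ Finset.univ) => t2 z j)
    linarith
  have hsum2 : (∑ j, mu j * h j z) = ∑ j, ρ * max 0 (h j z) := by
    have hle1 := Finset.sum_le_sum (fun i (_ : i ∈ Finset.univ) => t1 z i)
    have hle2 := Finset.sum_le_sum (fun j (_ : j ∈ Finset.univ) => t2 z j)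
    linarith
  have hterm1 : ∀ i : Fin r, lam i * g i z = ρ * |g i z| :=
    fun i => (Finset.sum_eq_sum_iff_of_le (fun i _ => t1 z i)).mp hsum1 i (Finset.mem_univ i)
  have hterm2 : ∀ j : Fin s, mu j * h j z = ρ * max 0 (h j z) :=
    fun j => (Finset.sum_eq_sum_iff_of_le (fun j _ => t2 z j)).mp hsum2 j (Finset.mem_univ j)
  have hgz : ∀ i, g i z = 0 := by
    intro i
    by_contra hne
    have habs : 0 < |g i z| := abs_pos.mpr hne
    have : lam i * g i z < ρ * |g i z| := by
      calc lam i * g i z ≤ |lam i| * |g i z| := by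
            rw [← abs_mul]; exact le_abs_self _
        _ < ρ * |g i z| := mul_lt_mul_of_pos_right (hρ i) habs
    exact absurd (hterm1 i) (ne_of_lt this)
  have hhz : ∀ j, h j z ≤ 0 := by
    intro j
    by_contra hne
    push_neg at hne
    have : mu j * h j z < ρ * max 0 (h j z) := by
      rw [max_eq_right hne.le]
      exact mul_lt_mul_of_pos_right (hρ' j) hne
    exact absurd (hterm2 j) (ne_of_lt this)
  refine ⟨hgz, hhz, ?_⟩
  intro w hgw hhw
  have hEz : E z = f z := hEfeas z hgz hhz
  have hEw : E w = f w := hEfeas w hgw hhw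
  calc f z = E z := hEz.symm
    _ ≤ E w := hz w
    _ = f w := hEw
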